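/- Fix an integer d ≥ 2, let b ∈ [1/d, 1], let λ : Fin d → ℝ satisfy λᵢ ≥ 0, Σᵢ λᵢ = 1 and Σᵢ √λᵢ = √(d·b), and set φ := Σᵢ √λᵢ·e_{(i,i)}. Then for every a ∈ [0, 1−b], the matrix ρ = b·Φ_d + (a/(d−1))·(Q − Φ_d) + ((1−a−b)/(d(d−1)))·(𝟙 − Q) lies in the convex hull, taken in the real vector space of (d²)×(d²) complex matrices, of the isotropic orbit orb_iso(φ) = { |(U ⊗ conj(U))φ⟩⟨(U ⊗ conj(U))φ| : U a d×d unitary }. -/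

import Mathlib

open scoped BigOperators
open Finset Complex Matrix
set_option maxHeartbeats 2000000

variable {d : ℕ}

lemma perm_sum_comp (τ : Equiv.Perm (Fin d)) (F : Equiv.Perm (Fin d) → ℂ) :
    ∑ σ : Equiv.Perm (Fin d), F σ = ∑ σ : Equiv.Perm (Fin d), F (σ * τ) :=
  (Equiv.sum_comp (Equiv.mulRight τ) F).symm

lemma perm_sum_inv (F : Equiv.Perm (Fin d) → ℂ) :
    ∑ σ : Equiv.Perm (Fin d), F σ⁻¹ = ∑ σ : Equiv.Perm (Fin d), F σ :=
  Equiv.sum_comp (Equiv.inv _) F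

lemma P1 (hd : 0 < d) (f : Fin d → ℂ) (k : Fin d) :
    (d : ℂ) * ∑ σ : Equiv.Perm (Fin d), f (σ k) = (Nat.factorial d : ℂ) * ∑ i, f i := by
  have hconst : ∀ k' : Fin d, ∑ σ : Equiv.Perm (Fin d), f (σ k') = ∑ σ : Equiv.Perm (Fin d), f (σ k) := by
    intro k'
    rw [perm_sum_comp (Equiv.swap k' k)]
    simp [Equiv.Perm.mul_apply]
  have h1 : ∑ k' : Fin d, ∑ σ : Equiv.Perm (Fin d), f (σ k') = (d : ℂ) * ∑ σ : Equiv.Perm (Fin d), f (σ k) := by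
    rw [Finset.sum_congr rfl (fun k' _ => hconst k')]
    simp [Finset.sum_const, Finset.card_univ, nsmul_eq_mul]
  rw [← h1, Finset.sum_comm]
  have h2 : ∀ σ : Equiv.Perm (Fin d), ∑ k' : Fin d, f (σ k') = ∑ i, f i := fun σ => Equiv.sum_comp σ f
  rw [Finset.sum_congr rfl (fun σ _ => h2 σ)]
  simp [Finset.sum_const, Finset.card_univ, nsmul_eq_mul, Fintype.card_perm]

lemma exists_perm_pair {k l k' l' : Fin d} (hkl : k ≠ l) (hkl' : k' ≠ l') :
    ∃ τ : Equiv.Perm (Fin d), τ k = k' ∧ τ l = l' := by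
  refine ⟨(Equiv.swap (Equiv.swap k k' l) l') * (Equiv.swap k k'), ?_, ?_⟩
  · have h1 : Equiv.swap k k' l ≠ k' := by
      intro h
      exact hkl (Equiv.swap k k'|>.injective (h.trans (Equiv.swap_apply_left k k').symm)).symm
    simp [Equiv.Perm.mul_apply, Equiv.swap_apply_left,
      Equiv.swap_apply_of_ne_of_ne (Ne.symm h1) hkl']
  · simp [Equiv.Perm.mul_apply, Equiv.swap_apply_left]

lemma P2 (hd : 0 < d) (h : Fin d → Fin d → ℂ) {k l : Fin d} (hkl : k ≠ l) :
    ((d : ℂ) * (d - 1)) * ∑ σ : Equiv.Perm (Fin d), h (σ k) (σ l)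
      = (Nat.factorial d : ℂ) * ∑ p ∈ (univ : Finset (Fin d)).offDiag, h p.1 p.2 := by
  have hconst : ∀ p ∈ (univ : Finset (Fin d)).offDiag,
      ∑ σ : Equiv.Perm (Fin d), h (σ p.1) (σ p.2) = ∑ σ : Equiv.Perm (Fin d), h (σ k) (σ l) := by
    rintro ⟨k', l'⟩ hp
    rw [Finset.mem_offDiag] at hp
    obtain ⟨τ, hτ1, hτ2⟩ := exists_perm_pair hp.2.2 hkl
    rw [perm_sum_comp τ]
    simp [Equiv.Perm.mul_apply, hτ1, hτ2]
  have hcard : ((univ : Finset (Fin d)).offDiag.card : ℂ) = (d : ℂ) * (d - 1) := by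
    rw [Finset.offDiag_card]
    simp [Finset.card_univ]
    push_cast [Nat.cast_sub (Nat.le_mul_of_pos_left d hd)]
    ring
  have h1 : ∑ p ∈ (univ : Finset (Fin d)).offDiag, ∑ σ : Equiv.Perm (Fin d), h (σ p.1) (σ p.2)
      = ((d : ℂ) * (d-1)) * ∑ σ : Equiv.Perm (Fin d), h (σ k) (σ l) := by
    rw [Finset.sum_congr rfl hconst, Finset.sum_const, ← hcard, nsmul_eq_mul]
  rw [← h1, Finset.sum_comm]
  have h2 : ∀ σ : Equiv.Perm (Fin d), ∑ p ∈ (univ : Finset (Fin d)).offDiag, h (σ p.1) (σ p.2)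
      = ∑ p ∈ (univ : Finset (Fin d)).offDiag, h p.1 p.2 := by
    intro σ
    apply Finset.sum_nbij' (fun p => (σ p.1, σ p.2)) (fun p => (σ⁻¹ p.1, σ⁻¹ p.2)) <;>
      simp +contextual [Finset.mem_offDiag]
  rw [Finset.sum_congr rfl (fun σ _ => h2 σ)]
  simp [Finset.sum_const, Finset.card_univ, nsmul_eq_mul, Fintype.card_perm]

variable {d : ℕ}

lemma mulVec_kron (lam : Fin d → ℝ) (φ : Fin d × Fin d → ℂ)
    (hφ : φ = fun p => if p.1 = p.2 then ((Real.sqrt (lam p.1) : ℝ) : ℂ) else 0)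
    (U : Matrix (Fin d) (Fin d) ℂ) (k l : Fin d) :
    (Matrix.kroneckerMap (· * ·) U (U.map (starRingEnd ℂ))).mulVec φ (k, l)
      = ∑ i, ((Real.sqrt (lam i) : ℝ) : ℂ) * (U k i * (starRingEnd ℂ) (U l i)) := by
  rw [Matrix.mulVec, dotProduct, Fintype.sum_prod_type]
  subst hφ
  apply Finset.sum_congr rfl
  intro i _
  rw [Finset.sum_eq_single i]
  · simp [Matrix.kroneckerMap_apply, Matrix.map_apply]; ring
  · intro j _ hji
    simp [Ne.symm hji]
  · simp

noncomputable def PM (d : ℕ) (σ : Equiv.Perm (Fin d)) : Matrix (Fin d) (Fin d) ℂ :=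
  Matrix.of fun k i => if k = σ i then 1 else 0

lemma delta_sum (k l : Fin d) :
    ∑ j, (if k = j then (1:ℂ) else 0) * (if l = j then (1:ℂ) else 0)
      = if k = l then 1 else 0 := by
  by_cases hkl : k = l
  · subst hkl
    rw [if_pos rfl, Finset.sum_eq_single k]
    · simp
    · intro j _ hj; simp [Ne.symm hj]
    · simp
  · rw [if_neg hkl]
    apply Finset.sum_eq_zero
    intro j _
    by_cases h1 : k = j <;> by_cases h2 : l = j
    · exact absurd (h1.trans h2.symm) hkl
    all_goals simp [h1, h2]

lemma PM_unitary (σ : Equiv.Perm (Fin d)) : PM d σ ∈ Matrix.unitaryGroup (Fin d) ℂ := by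
  rw [Matrix.mem_unitaryGroup_iff]
  ext k l
  rw [Matrix.mul_apply, Matrix.one_apply]
  have h1 : ∀ i, PM d σ k i * (star (PM d σ)) i l
      = (fun j => (if k = j then (1:ℂ) else 0) * (if l = j then (1:ℂ) else 0)) (σ i) := by
    intro i
    by_cases h1 : k = σ i <;> by_cases h2 : l = σ i <;>
      simp [PM, Matrix.star_apply, h1, h2]
  rw [Finset.sum_congr rfl (fun i _ => h1 i),
    Equiv.sum_comp σ (fun j => (if k = j then (1:ℂ) else 0) * (if l = j then (1:ℂ) else 0)),
    delta_sum]

lemma mulVec_PM (lam : Fin d → ℝ) (φ : Fin d × Fin d → ℂ)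
    (hφ : φ = fun p => if p.1 = p.2 then ((Real.sqrt (lam p.1) : ℝ) : ℂ) else 0)
    (σ : Equiv.Perm (Fin d)) (k l : Fin d) :
    (Matrix.kroneckerMap (· * ·) (PM d σ) ((PM d σ).map (starRingEnd ℂ))).mulVec φ (k, l)
      = if k = l then ((Real.sqrt (lam (σ⁻¹ k)) : ℝ) : ℂ) else 0 := by
  rw [mulVec_kron lam φ hφ]
  have h1 : ∀ i : Fin d, ((Real.sqrt (lam i) : ℝ) : ℂ) * (PM d σ k i * (starRingEnd ℂ) (PM d σ l i))
      = (fun j => ((Real.sqrt (lam (σ⁻¹ j)) : ℝ) : ℂ) * ((if k = j then (1:ℂ) else 0) * (if l = j then (1:ℂ) else 0))) (σ i) := by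
    intro i
    by_cases h1 : k = σ i <;> by_cases h2 : l = σ i <;>
      simp [PM, h1, h2]
  rw [Finset.sum_congr rfl (fun i _ => h1 i),
    Equiv.sum_comp σ (fun j => ((Real.sqrt (lam (σ⁻¹ j)) : ℝ) : ℂ) * ((if k = j then (1:ℂ) else 0) * (if l = j then (1:ℂ) else 0)))]
  by_cases hkl : k = l
  · subst hkl
    rw [if_pos rfl, Finset.sum_eq_single k]
    · simp
    · intro j _ hj; simp [Ne.symm hj]
    · simp
  · rw [if_neg hkl]
    apply Finset.sum_eq_zero
    intro j _
    by_cases h1 : k = j <;> by_cases h2 : l = j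
    · exact absurd (h1.trans h2.symm) hkl
    all_goals simp [h1, h2]

noncomputable def Fc (d : ℕ) (u i : Fin d) : ℂ :=
  Complex.exp (((2 * Real.pi * u * i / d : ℝ) : ℂ) * Complex.I) / ((Real.sqrt d : ℝ) : ℂ)

variable {d : ℕ}

lemma conj_exp_real_I (θ : ℝ) :
    (starRingEnd ℂ) (Complex.exp ((θ : ℂ) * Complex.I))
      = Complex.exp (((-θ : ℝ) : ℂ) * Complex.I) := by
  rw [← Complex.exp_conj]
  congr 1
  simp [Complex.conj_I, Complex.conj_ofReal]

lemma Fc_symm (u i : Fin d) : Fc d u i = Fc d i u := by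
  unfold Fc; ring_nf

lemma sqrtd_sq (hd : 0 < d) : ((Real.sqrt d : ℝ) : ℂ) * ((Real.sqrt d : ℝ) : ℂ) = (d : ℂ) := by
  rw [← Complex.ofReal_mul, Real.mul_self_sqrt (by positivity)]
  norm_cast

lemma Fc_mul_conj (hd : 0 < d) (u i v j : Fin d) :
    Fc d u i * (starRingEnd ℂ) (Fc d v j)
      = Complex.exp (((2 * Real.pi * (u * i - v * j) / d : ℝ) : ℂ) * Complex.I) / d := by
  unfold Fc
  rw [map_div₀, conj_exp_real_I, Complex.conj_ofReal, div_mul_div_comm, ← Complex.exp_add,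
    sqrtd_sq hd]
  congr 2
  rw [← add_mul, ← Complex.ofReal_add]
  congr 2
  push_cast
  ring

lemma Fc_mul_conj_self (hd : 0 < d) (u i : Fin d) :
    Fc d u i * (starRingEnd ℂ) (Fc d u i) = (d : ℂ)⁻¹ := by
  rw [Fc_mul_conj hd]
  simp

lemma Fc_orth (hd : 0 < d) (i j : Fin d) :
    ∑ u, Fc d u i * (starRingEnd ℂ) (Fc d u j) = if i = j then 1 else 0 := by
  have hdne : (d : ℂ) ≠ 0 := Nat.cast_ne_zero.mpr hd.ne'
  by_cases hij : i = j
  · subst hij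
    rw [if_pos rfl, Finset.sum_congr rfl (fun u _ => Fc_mul_conj_self hd u i)]
    simp [Finset.card_univ]
    rw [mul_inv_cancel₀ hdne]
  · rw [if_neg hij]
    set m : ℤ := (i : ℤ) - (j : ℤ) with hm
    have hmne : m ≠ 0 := by
      simp [hm, sub_eq_zero]
      exact fun h => hij (Fin.ext (by exact_mod_cast h))
    have hmlt : m < d := by simp [hm]; omega
    have hmgt : -(d : ℤ) < m := by have := j.isLt; simp [hm]; omega
    set ζ : ℂ := Complex.exp (((2 * Real.pi * m / d : ℝ) : ℂ) * Complex.I) with hζ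
    have hterm : ∀ u : Fin d, Fc d u i * (starRingEnd ℂ) (Fc d u j) = ζ ^ (u : ℕ) / d := by
      intro u
      have hang : ((2 * Real.pi * (u * i - u * j) / d : ℝ) : ℂ) * Complex.I
          = ((u : ℕ) : ℂ) * (((2 * Real.pi * m / d : ℝ) : ℂ) * Complex.I) := by
        simp only [hm]
        push_cast
        ring
      rw [Fc_mul_conj hd, hang, Complex.exp_nat_mul, hζ]
    rw [Finset.sum_congr rfl (fun u _ => hterm u), ← Finset.sum_div]
    have hζd : ζ ^ d = 1 := by
      rw [hζ, ← Complex.exp_nat_mul, Complex.exp_eq_one_iff]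
      refine ⟨m, ?_⟩
      have hdr : (d : ℝ) ≠ 0 := Nat.cast_ne_zero.mpr hd.ne'
      push_cast
      field_simp
    have hζne : ζ ≠ 1 := by
      rw [hζ, Ne, Complex.exp_eq_one_iff]
      rintro ⟨n, hn⟩
      have hn' : ((2 * Real.pi * m / d : ℝ) : ℂ) * Complex.I
          = ((2 * Real.pi * n : ℝ) : ℂ) * Complex.I := by
        rw [hn]; push_cast; ring
      have hn2 := mul_right_cancel₀ Complex.I_ne_zero hn'
      have hn3 : (2 * Real.pi * m / d : ℝ) = 2 * Real.pi * n := by exact_mod_cast hn2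
      have hdr : (d : ℝ) ≠ 0 := Nat.cast_ne_zero.mpr hd.ne'
      have hπ : Real.pi ≠ 0 := Real.pi_ne_zero
      have h2π : (2 * Real.pi : ℝ) ≠ 0 := by positivity
      have hn4 : 2 * Real.pi * (m : ℝ) = 2 * Real.pi * ((n : ℝ) * d) := by
        field_simp at hn3
        linear_combination (2 * Real.pi) * hn3
      have hmd : (m : ℝ) = (n : ℝ) * d := mul_left_cancel₀ h2π hn4
      have hmz : m = n * d := by exact_mod_cast hmd
      have hdz : (0 : ℤ) < d := by exact_mod_cast hd
      rcases lt_trichotomy n 0 with h | h | h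
      · have hle : n * (d : ℤ) ≤ -1 * d := mul_le_mul_of_nonneg_right (by omega) (by omega)
        linarith
      · rw [h] at hmz; simp at hmz; exact hmne hmz
      · have hle : 1 * (d : ℤ) ≤ n * d := mul_le_mul_of_nonneg_right (by omega) (by omega)
        linarith
    have hzero : ∑ u : Fin d, ζ ^ (u : ℕ) = 0 := by
      rw [Fin.sum_univ_eq_sum_range (fun n => ζ ^ n) d, geom_sum_eq hζne, hζd]
      simp
    rw [hzero, zero_div]

noncomputable def zet (w : Fin 4) : ℂ := Complex.I ^ (w : ℕ)

lemma zet_mul_conj (w : Fin 4) : zet w * (starRingEnd ℂ) (zet w) = 1 := by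
  unfold zet
  rw [map_pow, Complex.conj_I, ← mul_pow]
  simp

lemma zet_conj_mul (w : Fin 4) : (starRingEnd ℂ) (zet w) * zet w = 1 := by
  rw [mul_comm]; exact zet_mul_conj w

-- per-coordinate sum
lemma coord_sum (a bb : ℕ) (ha : a ≤ 2) (hb : bb ≤ 2) :
    ∑ w : Fin 4, (zet w) ^ a * ((starRingEnd ℂ) (zet w)) ^ bb
      = if a = bb then 4 else 0 := by
  have hI : ∀ w : Fin 4, (starRingEnd ℂ) (zet w) = (-Complex.I) ^ (w : ℕ) := by
    intro w; unfold zet; rw [map_pow, Complex.conj_I]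
  simp only [hI]
  unfold zet
  have h0 : ((0 : Fin 4) : ℕ) = 0 := rfl
  have h1 : ((1 : Fin 4) : ℕ) = 1 := rfl
  have h2 : ((2 : Fin 4) : ℕ) = 2 := rfl
  have h3 : ((3 : Fin 4) : ℕ) = 3 := rfl
  interval_cases a <;> interval_cases bb <;>
    simp only [Fin.sum_univ_four, h0, h1, h2, h3, pow_zero, pow_one] <;>
    norm_num [pow_succ, Complex.I_mul_I] <;>
    ring_nf <;>
    norm_num [Complex.I_sq]

variable {d : ℕ}

lemma ind_iff (u v p q : Fin d) :
    (∀ i : Fin d, ((if i = u then 1 else 0) + (if i = q then 1 else 0) : ℕ)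
        = (if i = v then 1 else 0) + (if i = p then 1 else 0))
      ↔ ((u = v ∧ p = q) ∨ (u = p ∧ v = q)) := by
  constructor
  · intro h
    by_cases huv : u = v
    · refine Or.inl ⟨huv, ?_⟩
      by_cases hpq : p = q
      · exact hpq
      exfalso
      have hp := h p
      have e1 : (if p = p then (1:ℕ) else 0) = 1 := if_pos rfl
      rw [if_neg hpq, e1, ← huv] at hp
      split_ifs at hp <;> omega
    · refine Or.inr ⟨?_, ?_⟩
      · have hu := h u
        have e1 : (if u = u then (1:ℕ) else 0) = 1 := if_pos rfl
        rw [e1, if_neg huv] at hu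
        by_cases hup : u = p
        · exact hup
        exfalso
        rw [if_neg hup] at hu
        split_ifs at hu <;> omega
      · have hv := h v
        have e1 : (if v = v then (1:ℕ) else 0) = 1 := if_pos rfl
        rw [e1, if_neg (fun hh => huv hh.symm)] at hv
        by_cases hvq : v = q
        · exact hvq
        exfalso
        rw [if_neg hvq] at hv
        split_ifs at hv <;> omega
  · rintro (⟨h1, h2⟩ | ⟨h1, h2⟩) i
    · subst h1; subst h2; ring
    · subst h1; subst h2; ring

lemma prod_ind (P : Fin d → Prop) [DecidablePred P] :
    (∏ i : Fin d, (if P i then (4:ℂ) else 0))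
      = if (∀ i, P i) then (4:ℂ)^d else 0 := by
  by_cases hall : ∀ i, P i
  · rw [if_pos hall]
    rw [Finset.prod_congr rfl (fun i _ => if_pos (hall i))]
    simp [Finset.card_univ]
  · rw [if_neg hall]
    push_neg at hall
    obtain ⟨i0, hi0⟩ := hall
    exact Finset.prod_eq_zero (Finset.mem_univ i0) (if_neg hi0)

lemma zsum (hd : 0 < d) (u v p q : Fin d) :
    ∑ z : Fin d → Fin 4, zet (z u) * (starRingEnd ℂ) (zet (z v)) * (starRingEnd ℂ) (zet (z p)) * zet (z q)
      = (4:ℂ)^d * ((if u = v ∧ p = q then 1 else 0) + (if u = p ∧ v = q then 1 else 0)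
          - (if u = v ∧ v = p ∧ p = q then 1 else 0)) := by
  -- write the summand as a product over coordinates
  have hfac : ∀ z : Fin d → Fin 4,
      zet (z u) * (starRingEnd ℂ) (zet (z v)) * (starRingEnd ℂ) (zet (z p)) * zet (z q)
        = ∏ i : Fin d, (zet (z i)) ^ ((if i = u then 1 else 0) + (if i = q then 1 else 0) : ℕ)
            * ((starRingEnd ℂ) (zet (z i))) ^ ((if i = v then 1 else 0) + (if i = p then 1 else 0) : ℕ) := by
    intro z
    rw [Finset.prod_congr rfl (fun i _ => by rw [pow_add, pow_add])]
    have hsplit : ∀ i : Fin d,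
        (zet (z i)) ^ (if i = u then 1 else 0 : ℕ) * (zet (z i)) ^ (if i = q then 1 else 0 : ℕ)
          * ((((starRingEnd ℂ) (zet (z i))) ^ (if i = v then 1 else 0 : ℕ))
            * (((starRingEnd ℂ) (zet (z i))) ^ (if i = p then 1 else 0 : ℕ)))
        = ((if i = u then zet (z i) else 1) * (if i = q then zet (z i) else 1))
          * ((if i = v then (starRingEnd ℂ) (zet (z i)) else 1)
            * (if i = p then (starRingEnd ℂ) (zet (z i)) else 1)) := by
      intro i
      by_cases h1 : i = u <;> by_cases h2 : i = q <;> by_cases h3 : i = v <;> by_cases h4 : i = p <;>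
        simp [h1, h2, h3, h4]
    rw [Finset.prod_congr rfl (fun i _ => hsplit i)]
    rw [Finset.prod_mul_distrib, Finset.prod_mul_distrib, Finset.prod_mul_distrib]
    rw [Finset.prod_ite_eq' univ u (fun i => zet (z i)),
      Finset.prod_ite_eq' univ q (fun i => zet (z i)),
      Finset.prod_ite_eq' univ v (fun i => (starRingEnd ℂ) (zet (z i))),
      Finset.prod_ite_eq' univ p (fun i => (starRingEnd ℂ) (zet (z i)))]
    simp only [Finset.mem_univ, if_pos]
    ring
  rw [Finset.sum_congr rfl (fun z _ => hfac z)]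
  -- exchange sum and product
  have hpi : ∑ z : Fin d → Fin 4,
      ∏ i : Fin d, (zet (z i)) ^ ((if i = u then 1 else 0) + (if i = q then 1 else 0) : ℕ)
          * ((starRingEnd ℂ) (zet (z i))) ^ ((if i = v then 1 else 0) + (if i = p then 1 else 0) : ℕ)
      = ∏ i : Fin d, ∑ w : Fin 4, (zet w) ^ ((if i = u then 1 else 0) + (if i = q then 1 else 0) : ℕ)
          * ((starRingEnd ℂ) (zet w)) ^ ((if i = v then 1 else 0) + (if i = p then 1 else 0) : ℕ) := by
    rw [← Finset.sum_prod_piFinset]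
    rw [Fintype.piFinset_univ]
  rw [hpi]
  rw [Finset.prod_congr rfl (fun i _ => coord_sum _ _
    (by split_ifs <;> omega) (by split_ifs <;> omega))]
  rw [prod_ind (fun i => ((if i = u then 1 else 0) + (if i = q then 1 else 0) : ℕ)
      = (if i = v then 1 else 0) + (if i = p then 1 else 0))]
  rw [if_congr (ind_iff u v p q) rfl rfl]
  by_cases h1 : u = v ∧ p = q <;> by_cases h2 : u = p ∧ v = q
  · have h3 : u = v ∧ v = p ∧ p = q := ⟨h1.1, h1.1.symm.trans h2.1, h1.2⟩
    rw [if_pos (Or.inl h1), if_pos h1, if_pos h2, if_pos h3]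
    ring
  · have h3 : ¬ (u = v ∧ v = p ∧ p = q) := by
      rintro ⟨ha, hb, hc⟩
      exact h2 ⟨ha.trans hb, (hb.trans hc).symm.trans (ha.symm ▸ rfl) |>.symm⟩
    rw [if_pos (Or.inl h1), if_pos h1, if_neg h2, if_neg h3]
    ring
  · have h3 : ¬ (u = v ∧ v = p ∧ p = q) := by
      rintro ⟨ha, hb, hc⟩
      exact h1 ⟨ha, hc⟩
    rw [if_pos (Or.inr h2), if_neg h1, if_pos h2, if_neg h3]
    ring
  · have h3 : ¬ (u = v ∧ v = p ∧ p = q) := by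
      rintro ⟨ha, hb, hc⟩
      exact h1 ⟨ha, hc⟩
    rw [if_neg (by rintro (h | h) <;> [exact h1 h; exact h2 h]), if_neg h1, if_neg h2, if_neg h3]
    ring
noncomputable def Fm (d : ℕ) : Matrix (Fin d) (Fin d) ℂ := Matrix.of (Fc d)

noncomputable def Dm (d : ℕ) (lam : Fin d → ℝ) : Matrix (Fin d) (Fin d) ℂ :=
  Matrix.diagonal (fun i => ((Real.sqrt (lam i) : ℝ) : ℂ))

noncomputable def Gm (d : ℕ) (lam : Fin d → ℝ) : Matrix (Fin d) (Fin d) ℂ :=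
  Fm d * Dm d lam * (Fm d)ᴴ

variable {d : ℕ}

lemma Fm_conjT_mul (hd : 0 < d) : (Fm d)ᴴ * Fm d = 1 := by
  ext u v
  rw [Matrix.mul_apply, Matrix.one_apply]
  have h : ∀ i, (Fm d)ᴴ u i * Fm d i v = Fc d i v * (starRingEnd ℂ) (Fc d i u) := by
    intro i
    rw [Matrix.conjTranspose_apply]
    simp only [Fm, Matrix.of_apply, Complex.star_def]
    ring
  rw [Finset.sum_congr rfl (fun i _ => h i), Fc_orth hd v u]
  by_cases huv : u = v
  · subst huv; simp
  · rw [if_neg huv, if_neg (fun hh => huv hh.symm)]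

lemma Fm_mul_conjT (hd : 0 < d) : Fm d * (Fm d)ᴴ = 1 := by
  ext u v
  rw [Matrix.mul_apply, Matrix.one_apply]
  have h : ∀ i, Fm d u i * (Fm d)ᴴ i v = Fc d i u * (starRingEnd ℂ) (Fc d i v) := by
    intro i
    rw [Matrix.conjTranspose_apply]
    simp only [Fm, Matrix.of_apply, Complex.star_def]
    rw [Fc_symm u i, Fc_symm v i]
  rw [Finset.sum_congr rfl (fun i _ => h i), Fc_orth hd u v]

lemma Gm_apply (lam : Fin d → ℝ) (u v : Fin d) :
    Gm d lam u v = ∑ i, ((Real.sqrt (lam i) : ℝ) : ℂ) * (Fc d u i * (starRingEnd ℂ) (Fc d v i)) := by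
  unfold Gm Dm
  rw [Matrix.mul_apply]
  apply Finset.sum_congr rfl
  intro i _
  rw [Matrix.mul_diagonal, Matrix.conjTranspose_apply]
  simp only [Fm, Matrix.of_apply, Complex.star_def]
  ring

lemma Gm_diag {b : ℝ} (hd : 0 < d) (lam : Fin d → ℝ)
    (hs : ∑ i, Real.sqrt (lam i) = Real.sqrt (d * b)) (u : Fin d) :
    Gm d lam u u = ((Real.sqrt (d * b) : ℝ) : ℂ) / d := by
  rw [Gm_apply]
  rw [Finset.sum_congr rfl (fun i _ => by rw [Fc_mul_conj_self hd])]
  rw [← Finset.sum_mul]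
  rw [show ∑ i, ((Real.sqrt (lam i) : ℝ) : ℂ) = ((∑ i, Real.sqrt (lam i) : ℝ) : ℂ) by push_cast; rfl]
  rw [hs, div_eq_mul_inv]

lemma Gm_diag_mul {b : ℝ} (hd : 0 < d) (hb0 : 0 ≤ b) (lam : Fin d → ℝ)
    (hs : ∑ i, Real.sqrt (lam i) = Real.sqrt (d * b)) (u p : Fin d) :
    Gm d lam u u * (starRingEnd ℂ) (Gm d lam p p) = (((d : ℝ) * b : ℝ) : ℂ) / ((d : ℂ) * d) := by
  rw [Gm_diag hd lam hs u, Gm_diag hd lam hs p]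
  rw [map_div₀, Complex.conj_ofReal]
  rw [show (starRingEnd ℂ) ((d : ℂ)) = (d : ℂ) by simp]
  rw [div_mul_div_comm, ← Complex.ofReal_mul,
    Real.mul_self_sqrt (by positivity : (0:ℝ) ≤ (d : ℝ) * b)]

lemma Gm_total (hd : 0 < d) (lam : Fin d → ℝ) (hlam : ∀ i, 0 ≤ lam i)
    (hsum : ∑ i, lam i = 1) :
    ∑ p ∈ (univ ×ˢ univ : Finset (Fin d × Fin d)),
      Gm d lam p.1 p.2 * (starRingEnd ℂ) (Gm d lam p.1 p.2) = 1 := by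
  have e1 : Gm d lam * (Gm d lam)ᴴ = Fm d * (Dm d lam * (Dm d lam)ᴴ) * (Fm d)ᴴ := by
    unfold Gm
    rw [conjTranspose_mul, conjTranspose_mul, conjTranspose_conjTranspose]
    simp only [Matrix.mul_assoc]
    rw [← Matrix.mul_assoc ((Fm d)ᴴ) (Fm d), Fm_conjT_mul hd, Matrix.one_mul]
  have e2 : (Gm d lam * (Gm d lam)ᴴ).trace = 1 := by
    rw [e1, Matrix.trace_mul_comm, ← Matrix.mul_assoc, Fm_conjT_mul hd, Matrix.one_mul]
    unfold Dm
    rw [Matrix.diagonal_conjTranspose, Matrix.diagonal_mul_diagonal, Matrix.trace_diagonal]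
    simp only [Pi.mul_apply, Pi.star_apply, Complex.star_def, Complex.conj_ofReal]
    rw [Finset.sum_congr rfl
      (fun i _ => by rw [← Complex.ofReal_mul, Real.mul_self_sqrt (hlam i)])]
    rw [show ∑ i, ((lam i : ℝ) : ℂ) = ((∑ i, lam i : ℝ) : ℂ) by push_cast; rfl, hsum]
    norm_num
  rw [Finset.sum_product]
  rw [← e2, Matrix.trace]
  apply Finset.sum_congr rfl
  intro u _
  rw [Matrix.diag_apply, Matrix.mul_apply]
  apply Finset.sum_congr rfl
  intro v _
  rw [Matrix.conjTranspose_apply, Complex.star_def]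

lemma Gm_offdiag {b : ℝ} (hd : 0 < d) (hb0 : 0 ≤ b) (lam : Fin d → ℝ) (hlam : ∀ i, 0 ≤ lam i)
    (hsum : ∑ i, lam i = 1) (hs : ∑ i, Real.sqrt (lam i) = Real.sqrt (d * b)) :
    ∑ p ∈ (univ : Finset (Fin d)).offDiag,
      Gm d lam p.1 p.2 * (starRingEnd ℂ) (Gm d lam p.1 p.2) = ((1 - b : ℝ) : ℂ) := by
  have hdC : (d : ℂ) ≠ 0 := Nat.cast_ne_zero.mpr hd.ne'
  have hdiag : ∑ p ∈ (univ : Finset (Fin d)).diag,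
      Gm d lam p.1 p.2 * (starRingEnd ℂ) (Gm d lam p.1 p.2) = ((b : ℝ) : ℂ) := by
    rw [Finset.sum_diag]
    rw [Finset.sum_congr rfl (fun u _ => Gm_diag_mul hd hb0 lam hs u u)]
    rw [Finset.sum_const, Finset.card_univ, Fintype.card_fin, nsmul_eq_mul]
    push_cast
    field_simp
    try ring
  have hsplit := Finset.sum_union
    (f := fun p : Fin d × Fin d => Gm d lam p.1 p.2 * (starRingEnd ℂ) (Gm d lam p.1 p.2))
    (Finset.disjoint_diag_offDiag (univ : Finset (Fin d)))
  rw [Finset.diag_union_offDiag, Gm_total hd lam hlam hsum, hdiag] at hsplit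
  have : ((1 - b : ℝ) : ℂ) = 1 - ((b:ℝ):ℂ) := by push_cast; ring
  rw [this]
  linear_combination -hsplit

noncomputable def UB (d : ℕ) (σ : Equiv.Perm (Fin d)) (z : Fin d → Fin 4) :
    Matrix (Fin d) (Fin d) ℂ :=
  Matrix.of fun k i => zet (z (σ⁻¹ k)) * Fc d (σ⁻¹ k) i

lemma Fc_orth_row (hd : 0 < d) (u v : Fin d) :
    ∑ i, Fc d u i * (starRingEnd ℂ) (Fc d v i) = if u = v then 1 else 0 := by
  rw [Finset.sum_congr rfl (fun i _ => by rw [Fc_symm u i, Fc_symm v i]), Fc_orth hd u v]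

lemma UB_unitary (hd : 0 < d) (σ : Equiv.Perm (Fin d)) (z : Fin d → Fin 4) :
    UB d σ z ∈ Matrix.unitaryGroup (Fin d) ℂ := by
  rw [Matrix.mem_unitaryGroup_iff]
  ext k l
  rw [Matrix.mul_apply, Matrix.one_apply]
  have h : ∀ i, UB d σ z k i * (star (UB d σ z)) i l
      = (zet (z (σ⁻¹ k)) * (starRingEnd ℂ) (zet (z (σ⁻¹ l))))
        * (Fc d (σ⁻¹ k) i * (starRingEnd ℂ) (Fc d (σ⁻¹ l) i)) := by
    intro i
    rw [Matrix.star_apply, Complex.star_def]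
    simp only [UB, Matrix.of_apply, _root_.map_mul]
    ring
  rw [Finset.sum_congr rfl (fun i _ => h i), ← Finset.mul_sum, Fc_orth_row hd]
  by_cases hkl : k = l
  · subst hkl
    rw [if_pos rfl, if_pos rfl, mul_one, zet_mul_conj]
  · rw [if_neg hkl, if_neg (fun hh => hkl (σ⁻¹.injective hh)), mul_zero]

lemma mulVec_UB (hd : 0 < d) (lam : Fin d → ℝ) (φ : Fin d × Fin d → ℂ)
    (hφ : φ = fun p => if p.1 = p.2 then ((Real.sqrt (lam p.1) : ℝ) : ℂ) else 0)
    (σ : Equiv.Perm (Fin d)) (z : Fin d → Fin 4) (k l : Fin d) :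
    (Matrix.kroneckerMap (· * ·) (UB d σ z) ((UB d σ z).map (starRingEnd ℂ))).mulVec φ (k, l)
      = zet (z (σ⁻¹ k)) * (starRingEnd ℂ) (zet (z (σ⁻¹ l))) * Gm d lam (σ⁻¹ k) (σ⁻¹ l) := by
  rw [mulVec_kron lam φ hφ, Gm_apply, Finset.mul_sum]
  apply Finset.sum_congr rfl
  intro i _
  simp only [UB, Matrix.of_apply, _root_.map_mul]
  ring

lemma lemB_mem (d : ℕ) (hd : 2 ≤ d)
    (b : ℝ) (hb : b ∈ Set.Icc (1 / (d : ℝ)) 1)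
    (lam : Fin d → ℝ) (hlam : ∀ i, 0 ≤ lam i) (hsum : ∑ i, lam i = 1)
    (hs : ∑ i, Real.sqrt (lam i) = Real.sqrt (d * b))
    (φ : Fin d × Fin d → ℂ)
    (hφ : φ = fun p => if p.1 = p.2 then ((Real.sqrt (lam p.1) : ℝ) : ℂ) else 0)
    (Φ : Matrix (Fin d × Fin d) (Fin d × Fin d) ℂ)
    (hΦ : ∀ p q, Φ p q = if p.1 = p.2 ∧ q.1 = q.2 then ((d : ℂ))⁻¹ else 0)
    (Q : Matrix (Fin d × Fin d) (Fin d × Fin d) ℂ)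
    (hQ : ∀ p q, Q p q = if p.1 = p.2 ∧ q = p then 1 else 0) :
    b • Φ + ((1 - b) / ((d : ℝ) * ((d : ℝ) - 1))) • (1 - Q) ∈
      convexHull ℝ { A : Matrix (Fin d × Fin d) (Fin d × Fin d) ℂ |
        ∃ U : Matrix.unitaryGroup (Fin d) ℂ,
          A = Matrix.vecMulVec
            ((Matrix.kroneckerMap (· * ·) (U : Matrix (Fin d) (Fin d) ℂ)
              ((U : Matrix (Fin d) (Fin d) ℂ).map (starRingEnd ℂ))).mulVec φ)
            (star ((Matrix.kroneckerMap (· * ·) (U : Matrix (Fin d) (Fin d) ℂ)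
              ((U : Matrix (Fin d) (Fin d) ℂ).map (starRingEnd ℂ))).mulVec φ)) } := by
  have hd0 : 0 < d := by omega
  have hdR : (0:ℝ) < d := by exact_mod_cast hd0
  have hb0 : 0 ≤ b := le_trans (by positivity) hb.1
  have hdC : (d : ℂ) ≠ 0 := Nat.cast_ne_zero.mpr hd0.ne'
  have hd1C : (d : ℂ) - 1 ≠ 0 := by
    intro h
    have h1 : (d : ℂ) = 1 := by linear_combination h
    have h2 : d = 1 := by exact_mod_cast h1
    omega
  have hfacC : ((Nat.factorial d : ℕ) : ℂ) ≠ 0 := Nat.cast_ne_zero.mpr (Nat.factorial_ne_zero d)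
  have h4C : ((4:ℂ))^d ≠ 0 := pow_ne_zero _ (by norm_num)
  set ψ : (Equiv.Perm (Fin d) × (Fin d → Fin 4)) → (Fin d × Fin d → ℂ) :=
    fun w p => zet (w.2 (w.1⁻¹ p.1)) * (starRingEnd ℂ) (zet (w.2 (w.1⁻¹ p.2)))
      * Gm d lam (w.1⁻¹ p.1) (w.1⁻¹ p.2) with hψdef
  have hψeq : ∀ w : Equiv.Perm (Fin d) × (Fin d → Fin 4),
      (Matrix.kroneckerMap (· * ·) (UB d w.1 w.2) ((UB d w.1 w.2).map (starRingEnd ℂ))).mulVec φ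
        = ψ w := by
    intro w
    funext p
    obtain ⟨k, l⟩ := p
    rw [mulVec_UB hd0 lam φ hφ w.1 w.2 k l]
  have hcm : Finset.centerMass (univ : Finset (Equiv.Perm (Fin d) × (Fin d → Fin 4))) (fun _ => (1:ℝ))
      (fun w => Matrix.vecMulVec (ψ w) (star (ψ w)))
      = (((Nat.factorial d * 4^d : ℕ)) : ℝ)⁻¹ • ∑ w : Equiv.Perm (Fin d) × (Fin d → Fin 4),
          Matrix.vecMulVec (ψ w) (star (ψ w)) := by
    rw [Finset.centerMass]
    simp [Finset.card_univ, Fintype.card_prod, Fintype.card_perm, Fintype.card_fun,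
      Fintype.card_fin]
  have hkey : (((Nat.factorial d * 4^d : ℕ)) : ℝ)⁻¹ • ∑ w : Equiv.Perm (Fin d) × (Fin d → Fin 4),
      Matrix.vecMulVec (ψ w) (star (ψ w))
      = b • Φ + ((1 - b) / ((d : ℝ) * ((d : ℝ) - 1))) • (1 - Q) := by
    ext p q
    obtain ⟨k, l⟩ := p
    obtain ⟨m, n⟩ := q
    rw [Matrix.smul_apply, Matrix.sum_apply, Matrix.add_apply, Matrix.smul_apply,
      Matrix.smul_apply, Matrix.sub_apply, hΦ, hQ, Matrix.one_apply]
    simp only [Complex.real_smul, Matrix.vecMulVec_apply, Pi.star_apply]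
    rw [Fintype.sum_prod_type]
    have hz : ∀ σ : Equiv.Perm (Fin d),
        ∑ z : Fin d → Fin 4, ψ (σ, z) (k, l) * star (ψ (σ, z) (m, n))
          = ((4:ℂ)^d * ((if k = l ∧ m = n then (1:ℂ) else 0)
              + (if k = m ∧ l = n then 1 else 0)
              - (if k = l ∧ l = m ∧ m = n then 1 else 0)))
            * (Gm d lam (σ⁻¹ k) (σ⁻¹ l) * (starRingEnd ℂ) (Gm d lam (σ⁻¹ m) (σ⁻¹ n))) := by
      intro σ
      have hterm : ∀ z : Fin d → Fin 4, ψ (σ, z) (k, l) * star (ψ (σ, z) (m, n))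
          = (zet (z (σ⁻¹ k)) * (starRingEnd ℂ) (zet (z (σ⁻¹ l)))
              * (starRingEnd ℂ) (zet (z (σ⁻¹ m))) * zet (z (σ⁻¹ n)))
            * (Gm d lam (σ⁻¹ k) (σ⁻¹ l) * (starRingEnd ℂ) (Gm d lam (σ⁻¹ m) (σ⁻¹ n))) := by
        intro z
        simp only [hψdef]
        rw [Complex.star_def]
        simp only [_root_.map_mul, Complex.conj_conj]
        ring
      rw [Finset.sum_congr rfl (fun z _ => hterm z), ← Finset.sum_mul, zsum hd0]
      have e1 : (σ⁻¹ k = σ⁻¹ l ∧ σ⁻¹ m = σ⁻¹ n) ↔ (k = l ∧ m = n) := by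
        simp [EmbeddingLike.apply_eq_iff_eq]
      have e2 : (σ⁻¹ k = σ⁻¹ m ∧ σ⁻¹ l = σ⁻¹ n) ↔ (k = m ∧ l = n) := by
        simp [EmbeddingLike.apply_eq_iff_eq]
      have e3 : (σ⁻¹ k = σ⁻¹ l ∧ σ⁻¹ l = σ⁻¹ m ∧ σ⁻¹ m = σ⁻¹ n) ↔ (k = l ∧ l = m ∧ m = n) := by
        simp [EmbeddingLike.apply_eq_iff_eq]
      simp only [e1, e2, e3]
    rw [Finset.sum_congr rfl (fun σ _ => hz σ), ← Finset.mul_sum]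
    by_cases hkl : k = l
    · subst hkl
      by_cases hmn : m = n
      · subst hmn
        -- diagonal-diagonal block
        have hXv : ∀ σ : Equiv.Perm (Fin d),
            Gm d lam (σ⁻¹ k) (σ⁻¹ k) * (starRingEnd ℂ) (Gm d lam (σ⁻¹ m) (σ⁻¹ m))
              = (((d : ℝ) * b : ℝ) : ℂ) / ((d : ℂ) * d) :=
          fun σ => Gm_diag_mul hd0 hb0 lam hs (σ⁻¹ k) (σ⁻¹ m)
        rw [Finset.sum_congr rfl (fun σ _ => hXv σ), Finset.sum_const, Finset.card_univ,
          Fintype.card_perm, Fintype.card_fin, nsmul_eq_mul]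
        simp only [eq_self_iff_true, and_self, and_true, true_and, if_true, Prod.mk.injEq,
          eq_comm]
        push_cast
        field_simp
        try ring
      · -- k = l, m ≠ n : everything vanishes
        rw [if_neg (fun h : k = k ∧ m = n => hmn h.2),
          if_neg (fun h : k = m ∧ k = n => hmn (h.1.symm.trans h.2)),
          if_neg (fun h : k = k ∧ k = m ∧ m = n => hmn h.2.2),
          if_neg (fun h : k = k ∧ m = n => hmn h.2),
          if_neg (fun h : ((k,k) : Fin d × Fin d) = (m, n) =>
            hmn ((congrArg Prod.fst h).symm.trans (congrArg Prod.snd h))),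
          if_neg (fun h : (k,k).1 = (k,k).2 ∧ ((m,n) : Fin d × Fin d) = (k, k) =>
            hmn ((congrArg Prod.fst h.2).trans (congrArg Prod.snd h.2).symm))]
        ring
    · by_cases hmn : m = n
      · subst hmn
        rw [if_neg (fun h : k = l ∧ m = m => hkl h.1),
          if_neg (fun h : k = m ∧ l = m => hkl (h.1.trans h.2.symm)),
          if_neg (fun h : k = l ∧ l = m ∧ m = m => hkl h.1),
          if_neg (fun h : k = l ∧ m = m => hkl h.1),
          if_neg (fun h : ((k,l) : Fin d × Fin d) = (m, m) =>
            hkl ((congrArg Prod.fst h).trans (congrArg Prod.snd h).symm)),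
          if_neg (fun h : (k,l).1 = (k,l).2 ∧ ((m,m) : Fin d × Fin d) = (k, l) => hkl h.1)]
        ring
      · by_cases hkm2 : k = m ∧ l = n
        · obtain ⟨h1, h2⟩ := hkm2
          subst h1
          subst h2
          rw [if_neg (fun h : k = l ∧ k = l => hkl h.1),
            if_pos (⟨rfl, rfl⟩ : k = k ∧ l = l),
            if_neg (fun h : k = l ∧ l = k ∧ k = l => hkl h.1)]
          have hinv : ∑ σ : Equiv.Perm (Fin d),
              Gm d lam (σ⁻¹ k) (σ⁻¹ l) * (starRingEnd ℂ) (Gm d lam (σ⁻¹ k) (σ⁻¹ l))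
              = ∑ σ : Equiv.Perm (Fin d),
                Gm d lam (σ k) (σ l) * (starRingEnd ℂ) (Gm d lam (σ k) (σ l)) :=
            perm_sum_inv (fun τ => Gm d lam (τ k) (τ l) * (starRingEnd ℂ) (Gm d lam (τ k) (τ l)))
          rw [hinv]
          have hGP2 : ((d : ℂ) * ((d:ℂ) - 1)) * ∑ σ : Equiv.Perm (Fin d),
              Gm d lam (σ k) (σ l) * (starRingEnd ℂ) (Gm d lam (σ k) (σ l))
              = (Nat.factorial d : ℂ) * ∑ p ∈ (univ : Finset (Fin d)).offDiag,
                  Gm d lam p.1 p.2 * (starRingEnd ℂ) (Gm d lam p.1 p.2) :=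
            P2 hd0 (fun i j => Gm d lam i j * (starRingEnd ℂ) (Gm d lam i j)) hkl
          rw [Gm_offdiag hd0 hb0 lam hlam hsum hs] at hGP2
          have hX : ∑ σ : Equiv.Perm (Fin d),
              Gm d lam (σ k) (σ l) * (starRingEnd ℂ) (Gm d lam (σ k) (σ l))
              = (Nat.factorial d : ℂ) * ((1 - b : ℝ) : ℂ) / ((d : ℂ) * ((d:ℂ) - 1)) := by
            rw [eq_div_iff (mul_ne_zero hdC hd1C)]
            linear_combination hGP2
          rw [hX]
          rw [if_neg (fun h : (k,l).1 = (k,l).2 ∧ (k,l).1 = (k,l).2 => hkl h.1),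
            if_pos (rfl : ((k,l) : Fin d × Fin d) = (k,l)),
            if_neg (fun h : (k,l).1 = (k,l).2 ∧ ((k,l) : Fin d × Fin d) = (k,l) => hkl h.1)]
          push_cast
          field_simp
          ring
        · rw [if_neg (fun h : k = l ∧ m = n => hkl h.1),
            if_neg hkm2,
            if_neg (fun h : k = l ∧ l = m ∧ m = n => hkl h.1),
            if_neg (fun h : k = l ∧ m = n => hkl h.1),
            if_neg (fun h : ((k,l) : Fin d × Fin d) = (m, n) =>
              hkm2 ⟨congrArg Prod.fst h, congrArg Prod.snd h⟩),
            if_neg (fun h : (k,l).1 = (k,l).2 ∧ ((m,n) : Fin d × Fin d) = (k,l) => hkl h.1)]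
          ring
  rw [← hkey, ← hcm]
  exact Finset.centerMass_mem_convexHull _
    (fun i _ => zero_le_one)
    (by
      simp only [Finset.sum_const, Finset.card_univ, nsmul_eq_mul, mul_one, Fintype.card_prod,
        Fintype.card_perm, Fintype.card_fun, Fintype.card_fin]
      positivity)
    (fun w _ => ⟨⟨UB d w.1 w.2, UB_unitary hd0 w.1 w.2⟩, by rw [hψeq w]⟩)
lemma offdiag_sqrt_sum {d : ℕ} {b : ℝ} (lam : Fin d → ℝ) (hlam : ∀ i, 0 ≤ lam i)
    (hsum : ∑ i, lam i = 1) (hs : ∑ i, Real.sqrt (lam i) = Real.sqrt (d * b))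
    (hb0 : 0 ≤ b) :
    ∑ p ∈ (univ : Finset (Fin d)).offDiag, Real.sqrt (lam p.1) * Real.sqrt (lam p.2)
      = d * b - 1 := by
  have htot' : ∑ x : Fin d, ∑ y : Fin d, Real.sqrt (lam x) * Real.sqrt (lam y) = d * b := by
    rw [← Finset.sum_mul_sum, hs, Real.mul_self_sqrt (by positivity)]
  have htot : ∑ p ∈ (univ ×ˢ univ : Finset (Fin d × Fin d)),
      Real.sqrt (lam p.1) * Real.sqrt (lam p.2) = d * b := by
    rw [Finset.sum_product]; exact htot'
  have hdiag : ∑ p ∈ (univ : Finset (Fin d)).diag,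
      Real.sqrt (lam p.1) * Real.sqrt (lam p.2) = 1 := by
    rw [Finset.sum_diag]
    simp only
    rw [Finset.sum_congr rfl (fun i _ => Real.mul_self_sqrt (hlam i)), hsum]
  have hsplit := Finset.sum_union
    (f := fun p : Fin d × Fin d => Real.sqrt (lam p.1) * Real.sqrt (lam p.2))
    (Finset.disjoint_diag_offDiag (univ : Finset (Fin d)))
  rw [Finset.diag_union_offDiag, htot, hdiag] at hsplit
  linarith

lemma lemA_mem (d : ℕ) (hd : 2 ≤ d)
    (b : ℝ) (hb : b ∈ Set.Icc (1 / (d : ℝ)) 1)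
    (lam : Fin d → ℝ) (hlam : ∀ i, 0 ≤ lam i) (hsum : ∑ i, lam i = 1)
    (hs : ∑ i, Real.sqrt (lam i) = Real.sqrt (d * b))
    (φ : Fin d × Fin d → ℂ)
    (hφ : φ = fun p => if p.1 = p.2 then ((Real.sqrt (lam p.1) : ℝ) : ℂ) else 0)
    (Φ : Matrix (Fin d × Fin d) (Fin d × Fin d) ℂ)
    (hΦ : ∀ p q, Φ p q = if p.1 = p.2 ∧ q.1 = q.2 then ((d : ℂ))⁻¹ else 0)
    (Q : Matrix (Fin d × Fin d) (Fin d × Fin d) ℂ)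
    (hQ : ∀ p q, Q p q = if p.1 = p.2 ∧ q = p then 1 else 0) :
    b • Φ + ((1 - b) / ((d : ℝ) - 1)) • (Q - Φ) ∈
      convexHull ℝ { A : Matrix (Fin d × Fin d) (Fin d × Fin d) ℂ |
        ∃ U : Matrix.unitaryGroup (Fin d) ℂ,
          A = Matrix.vecMulVec
            ((Matrix.kroneckerMap (· * ·) (U : Matrix (Fin d) (Fin d) ℂ)
              ((U : Matrix (Fin d) (Fin d) ℂ).map (starRingEnd ℂ))).mulVec φ)
            (star ((Matrix.kroneckerMap (· * ·) (U : Matrix (Fin d) (Fin d) ℂ)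
              ((U : Matrix (Fin d) (Fin d) ℂ).map (starRingEnd ℂ))).mulVec φ)) } := by
  have hd0 : 0 < d := by omega
  have hdR : (0:ℝ) < d := by exact_mod_cast hd0
  have hb0 : 0 ≤ b := le_trans (by positivity) hb.1
  have hdC : (d : ℂ) ≠ 0 := Nat.cast_ne_zero.mpr hd0.ne'
  have hd1C : (d : ℂ) - 1 ≠ 0 := by
    intro h
    have h1 : (d : ℂ) = 1 := by linear_combination h
    have h2 : d = 1 := by exact_mod_cast h1
    omega
  have hfacC : ((Nat.factorial d : ℕ) : ℂ) ≠ 0 := Nat.cast_ne_zero.mpr (Nat.factorial_ne_zero d)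
  have hfacR : (0:ℝ) < (Nat.factorial d : ℝ) := by exact_mod_cast Nat.factorial_pos d
  set ψ : Equiv.Perm (Fin d) → (Fin d × Fin d → ℂ) :=
    fun σ p => if p.1 = p.2 then ((Real.sqrt (lam (σ⁻¹ p.1)) : ℝ) : ℂ) else 0 with hψ
  have hψeq : ∀ σ : Equiv.Perm (Fin d),
      (Matrix.kroneckerMap (· * ·) (PM d σ) ((PM d σ).map (starRingEnd ℂ))).mulVec φ = ψ σ := by
    intro σ
    funext p
    obtain ⟨k, l⟩ := p
    rw [mulVec_PM lam φ hφ σ k l]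
  have hcm : Finset.centerMass (univ : Finset (Equiv.Perm (Fin d))) (fun _ => (1:ℝ))
      (fun σ => Matrix.vecMulVec (ψ σ) (star (ψ σ)))
      = ((Nat.factorial d : ℝ))⁻¹ • ∑ σ : Equiv.Perm (Fin d), Matrix.vecMulVec (ψ σ) (star (ψ σ)) := by
    rw [Finset.centerMass]
    simp [Finset.card_univ, Fintype.card_perm]
  have hE : ∀ (σ : Equiv.Perm (Fin d)) (k l m n : Fin d),
      (ψ σ (k,l)) * star (ψ σ (m,n))
        = if k = l ∧ m = n
            then ((Real.sqrt (lam (σ⁻¹ k)) : ℝ) : ℂ) * ((Real.sqrt (lam (σ⁻¹ m)) : ℝ) : ℂ)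
            else 0 := by
    intro σ k l m n
    by_cases h1 : k = l <;> by_cases h2 : m = n <;>
      simp [hψ, h1, h2, Complex.star_def, Complex.conj_ofReal]
  have hkey : ((Nat.factorial d : ℝ))⁻¹ • ∑ σ : Equiv.Perm (Fin d), Matrix.vecMulVec (ψ σ) (star (ψ σ))
      = b • Φ + ((1 - b) / ((d : ℝ) - 1)) • (Q - Φ) := by
    ext p q
    obtain ⟨k, l⟩ := p
    obtain ⟨m, n⟩ := q
    rw [Matrix.smul_apply, Matrix.sum_apply]
    rw [Matrix.add_apply, Matrix.smul_apply, Matrix.smul_apply, Matrix.sub_apply, hΦ, hQ]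
    simp only [Complex.real_smul, Matrix.vecMulVec_apply, Pi.star_apply]
    rw [Finset.sum_congr rfl (fun σ _ => hE σ k l m n)]
    by_cases hcond : k = l ∧ m = n
    · obtain ⟨h1, h2⟩ := hcond
      subst h1
      subst h2
      rw [Finset.sum_congr rfl (fun σ _ => if_pos ⟨rfl, rfl⟩)]
      have hinvrw : ∑ σ : Equiv.Perm (Fin d), ((Real.sqrt (lam (σ⁻¹ k)) : ℝ) : ℂ) * ((Real.sqrt (lam (σ⁻¹ m)) : ℝ) : ℂ)
            = ∑ σ : Equiv.Perm (Fin d), ((Real.sqrt (lam (σ k)) : ℝ) : ℂ) * ((Real.sqrt (lam (σ m)) : ℝ) : ℂ) :=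
        perm_sum_inv (fun τ => ((Real.sqrt (lam (τ k)) : ℝ) : ℂ) * ((Real.sqrt (lam (τ m)) : ℝ) : ℂ))
      rw [hinvrw]
      by_cases hkm : k = m
      · subst hkm
        have hP1 := P1 hd0 (fun i => ((Real.sqrt (lam i) : ℝ) : ℂ) * ((Real.sqrt (lam i) : ℝ) : ℂ)) k
        have hlamsum : ∑ i, ((Real.sqrt (lam i) : ℝ) : ℂ) * ((Real.sqrt (lam i) : ℝ) : ℂ) = 1 := by
          have h : ∑ i, Real.sqrt (lam i) * Real.sqrt (lam i) = 1 := by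
            rw [Finset.sum_congr rfl (fun i _ => Real.mul_self_sqrt (hlam i)), hsum]
          calc ∑ i, ((Real.sqrt (lam i) : ℝ) : ℂ) * ((Real.sqrt (lam i) : ℝ) : ℂ)
              = ((∑ i, Real.sqrt (lam i) * Real.sqrt (lam i) : ℝ) : ℂ) := by norm_cast
            _ = 1 := by rw [h]; norm_num
        rw [hlamsum, mul_one] at hP1
        have hSig : ∑ σ : Equiv.Perm (Fin d), ((Real.sqrt (lam (σ k)) : ℝ) : ℂ) * ((Real.sqrt (lam (σ k)) : ℝ) : ℂ)
            = (Nat.factorial d : ℂ) / d := by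
          rw [eq_div_iff hdC]
          linear_combination hP1
        rw [hSig, if_pos (⟨rfl, rfl⟩ : (k,k).1 = (k,k).2 ∧ ((k,k) : Fin d × Fin d) = (k,k)),
          if_pos (⟨rfl, rfl⟩ : (k,k).1 = (k,k).2 ∧ (k,k).1 = (k,k).2)]
        push_cast
        field_simp
        try ring
      · have hP2 := P2 hd0 (fun i j => ((Real.sqrt (lam i) : ℝ) : ℂ) * ((Real.sqrt (lam j) : ℝ) : ℂ)) hkm
        have hoffC : ∑ p ∈ (univ : Finset (Fin d)).offDiag,
            ((Real.sqrt (lam p.1) : ℝ) : ℂ) * ((Real.sqrt (lam p.2) : ℝ) : ℂ)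
            = (((d : ℝ) * b - 1 : ℝ) : ℂ) := by
          have hre := offdiag_sqrt_sum lam hlam hsum hs hb0
          calc ∑ p ∈ (univ : Finset (Fin d)).offDiag,
              ((Real.sqrt (lam p.1) : ℝ) : ℂ) * ((Real.sqrt (lam p.2) : ℝ) : ℂ)
              = ((∑ p ∈ (univ : Finset (Fin d)).offDiag, Real.sqrt (lam p.1) * Real.sqrt (lam p.2) : ℝ) : ℂ) := by
                norm_cast
            _ = _ := by rw [hre]
        rw [hoffC] at hP2
        have hSig : ∑ σ : Equiv.Perm (Fin d), ((Real.sqrt (lam (σ k)) : ℝ) : ℂ) * ((Real.sqrt (lam (σ m)) : ℝ) : ℂ)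
            = (Nat.factorial d : ℂ) * (((d : ℝ) * b - 1 : ℝ) : ℂ) / ((d : ℂ) * ((d : ℂ) - 1)) := by
          rw [eq_div_iff (mul_ne_zero hdC hd1C)]
          linear_combination hP2
        rw [hSig,
          if_neg (show ¬((k,k).1 = (k,k).2 ∧ ((m,m) : Fin d × Fin d) = (k,k)) from
            fun ⟨_, h⟩ => hkm ((congrArg Prod.fst h).symm)),
          if_pos (⟨rfl, rfl⟩ : (k,k).1 = (k,k).2 ∧ (m,m).1 = (m,m).2)]
        push_cast
        field_simp
        try ring
    · rw [Finset.sum_congr rfl (fun σ _ => if_neg hcond), Finset.sum_const_zero]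
      rw [if_neg (show ¬((k,l).1 = (k,l).2 ∧ ((m,n) : Fin d × Fin d) = (k,l)) by
        rintro ⟨h1, h2⟩
        rw [Prod.ext_iff] at h2
        exact hcond ⟨h1, h2.1.trans (h1.trans h2.2.symm)⟩)]
      rw [if_neg (show ¬((k,l).1 = (k,l).2 ∧ (m,n).1 = (m,n).2) from hcond)]
      simp
  rw [← hkey, ← hcm]
  exact Finset.centerMass_mem_convexHull _
    (fun i _ => zero_le_one)
    (by
      simp only [Finset.sum_const, Finset.card_univ, nsmul_eq_mul, mul_one, Fintype.card_perm,
        Fintype.card_fin]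
      exact_mod_cast Nat.factorial_pos d)
    (fun σ _ => ⟨⟨PM d σ, PM_unitary σ⟩, by rw [hψeq σ]⟩)



/-- For `b ∈ [1/d,1]`, a Schmidt vector `λ` with `∑ᵢ √λᵢ = √(db)`, the pure state
`φ = ∑ᵢ √λᵢ |ii⟩`, and any `a ∈ [0, 1−b]`, the phase-permutation isotropic state
`ρ = bΦ_d + (a/(d−1))(Q − Φ_d) + ((1−a−b)/(d(d−1)))(𝟙 − Q)` lies in the convex hull
of the isotropic orbit `{ |(U ⊗ conj U)φ⟩⟨(U ⊗ conj U)φ| : U unitary }`. -/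
theorem phasePermIso_mem_convexHull_isoOrbit (d : ℕ) (hd : 2 ≤ d)
    (b : ℝ) (hb : b ∈ Set.Icc (1 / (d : ℝ)) 1)
    (lam : Fin d → ℝ) (hlam : ∀ i, 0 ≤ lam i) (hsum : ∑ i, lam i = 1)
    (hs : ∑ i, Real.sqrt (lam i) = Real.sqrt (d * b))
    (φ : Fin d × Fin d → ℂ)
    (hφ : φ = fun p => if p.1 = p.2 then ((Real.sqrt (lam p.1) : ℝ) : ℂ) else 0)
    (Φ : Matrix (Fin d × Fin d) (Fin d × Fin d) ℂ)
    (hΦ : ∀ p q, Φ p q = if p.1 = p.2 ∧ q.1 = q.2 then ((d : ℂ))⁻¹ else 0)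
    (Q : Matrix (Fin d × Fin d) (Fin d × Fin d) ℂ)
    (hQ : ∀ p q, Q p q = if p.1 = p.2 ∧ q = p then 1 else 0)
    (a : ℝ) (haa : a ∈ Set.Icc (0 : ℝ) (1 - b)) :
    b • Φ + (a / ((d : ℝ) - 1)) • (Q - Φ)
        + ((1 - a - b) / ((d : ℝ) * ((d : ℝ) - 1))) • (1 - Q) ∈
      convexHull ℝ { A : Matrix (Fin d × Fin d) (Fin d × Fin d) ℂ |
        ∃ U : Matrix.unitaryGroup (Fin d) ℂ,
          A = Matrix.vecMulVec
            ((Matrix.kroneckerMap (· * ·) (U : Matrix (Fin d) (Fin d) ℂ)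
              ((U : Matrix (Fin d) (Fin d) ℂ).map (starRingEnd ℂ))).mulVec φ)
            (star ((Matrix.kroneckerMap (· * ·) (U : Matrix (Fin d) (Fin d) ℂ)
              ((U : Matrix (Fin d) (Fin d) ℂ).map (starRingEnd ℂ))).mulVec φ)) } := by
  obtain ⟨ha1, ha2⟩ := haa
  have hMA := lemA_mem d hd b hb lam hlam hsum hs φ hφ Φ hΦ Q hQ
  have hMB := lemB_mem d hd b hb lam hlam hsum hs φ hφ Φ hΦ Q hQ
  by_cases hbe : b = 1
  · -- then a = 0 and 1 - a - b = 0; u = 0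
    have ha0 : a = 0 := le_antisymm (by rw [hbe] at ha2; linarith) ha1
    have key : b • Φ + (a / ((d : ℝ) - 1)) • (Q - Φ)
        + ((1 - a - b) / ((d : ℝ) * ((d : ℝ) - 1))) • (1 - Q)
        = b • Φ + ((1 - b) / ((d : ℝ) * ((d : ℝ) - 1))) • (1 - Q) := by
      rw [ha0, hbe]
      norm_num
    rw [key]
    exact hMB
  · have hblt : b < 1 := lt_of_le_of_ne hb.2 hbe
    have h1b : (0:ℝ) < 1 - b := by linarith
    set u : ℝ := a / (1 - b) with hu
    have hu0 : 0 ≤ u := div_nonneg ha1 (le_of_lt h1b)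
    have hu1 : u ≤ 1 := (div_le_one h1b).mpr ha2
    have hua : a = u * (1 - b) := by
      rw [hu, div_mul_cancel₀ _ h1b.ne']
    have hub : 1 - a - b = (1 - u) * (1 - b) := by
      rw [hua]
      ring
    have key : b • Φ + (a / ((d : ℝ) - 1)) • (Q - Φ)
        + ((1 - a - b) / ((d : ℝ) * ((d : ℝ) - 1))) • (1 - Q)
        = (1 - u) • (b • Φ + ((1 - b) / ((d : ℝ) * ((d : ℝ) - 1))) • (1 - Q))
          + u • (b • Φ + ((1 - b) / ((d : ℝ) - 1)) • (Q - Φ)) := by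
      rw [hub, hua]
      match_scalars <;> field_simp <;> ring
    rw [key]
    exact (convex_convexHull ℝ _) hMB hMA (by linarith) hu0 (by ring)
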